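/- Let $\alpha_1, \dots, \alpha_{k+1}$ be complex numbers with $\mathrm{Re}(\alpha_j) > 0$ for all $j$, and let $\Delta^k = \{(t_1,\dots,t_k) \in \mathbb{R}^k : t_j \geq 0, \sum_j t_j \leq 1\}$ be the standard $k$-simplex. Then $\int_{\Delta^k} t_1^{\alpha_1 - 1} \cdots t_k^{\alpha_k - 1} (1 - t_1 - \cdots - t_k)^{\alpha_{k+1} - 1}\, dt = \frac{\Gamma(\alpha_1)\cdots\Gamma(\alpha_{k+1})}{\Gamma(\alpha_1 + \cdots + \alpha_{k+1})}.$ -/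

import Mathlib

open MeasureTheory
open Complex Set

noncomputable section DirichletAux

private lemma meas_cpow_const' (s : ℂ) : Measurable fun x : ℂ => x ^ s := by
  have : (fun x : ℂ => x ^ s) = Set.piecewise {(0:ℂ)} (fun _ => if s = 0 then 1 else 0)
      (fun x => Complex.exp (Complex.log x * s)) := by
    ext x; by_cases hx : x = 0 <;> simp [hx, Complex.cpow_def, Set.piecewise]
  rw [this]
  exact Measurable.piecewise (measurableSet_singleton 0) measurable_const
    ((Complex.measurable_log.mul_const s).cexp)

private lemma cpow_finset_sum {c : ℂ} (hc : c ≠ 0) {ι : Type*} [DecidableEq ι] (s : Finset ι) (e : ι → ℂ) :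
    (∏ j ∈ s, c ^ (e j)) = c ^ (∑ j ∈ s, e j) := by
  induction s using Finset.induction with
  | empty => simp
  | insert _ _ h ih => rw [Finset.prod_insert h, Finset.sum_insert h, ih, Complex.cpow_add _ _ hc]

/-- scaled integrand -/
private def Fc (n : ℕ) (γ : Fin (n+1) → ℂ) (c : ℝ) : (Fin n → ℝ) → ℂ :=
  fun t => (∏ j : Fin n, ((t j : ℂ) ^ (γ j.castSucc - 1))) *
    (((c - ∑ j, t j : ℝ) : ℂ) ^ (γ (Fin.last n) - 1))

private def Sc (n : ℕ) (c : ℝ) : Set (Fin n → ℝ) := {t | (∀ j, 0 ≤ t j) ∧ ∑ j, t j ≤ c}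

private lemma measSc (n : ℕ) (c : ℝ) : MeasurableSet (Sc n c) := by
  have : Sc n c = (⋂ j, {t : Fin n → ℝ | 0 ≤ t j}) ∩ {t : Fin n → ℝ | ∑ j, t j ≤ c} := by
    ext t; simp [Sc, Set.mem_iInter]
  rw [this]
  exact (MeasurableSet.iInter fun j =>
      measurableSet_le measurable_const (measurable_pi_apply j)).inter
    (measurableSet_le (Finset.measurable_sum _ fun j _ => measurable_pi_apply j) measurable_const)

private lemma measFc (n : ℕ) (γ : Fin (n+1) → ℂ) (c : ℝ) : Measurable (Fc n γ c) := by
  refine Measurable.mul ?_ ?_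
  · exact Finset.measurable_prod _ fun j _ =>
      (meas_cpow_const' _).comp (Complex.measurable_ofReal.comp (measurable_pi_apply j))
  · exact (meas_cpow_const' _).comp (Complex.measurable_ofReal.comp
      ((measurable_const.sub (Finset.measurable_sum _ fun j _ => measurable_pi_apply j))))

private lemma smul_eq (n : ℕ) (γ : Fin (n+1) → ℂ) {c : ℝ} (hc : 0 < c) (v : Fin n → ℝ) :
    (Sc n c).indicator (Fc n γ c) (c • v) =
      (c:ℂ) ^ ((∑ j, γ j) - (n+1 : ℕ)) * (Sc n 1).indicator (Fc n γ 1) v := by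
  have hc0 : (c:ℂ) ≠ 0 := Complex.ofReal_ne_zero.2 hc.ne'
  have hsum : ∑ j, (c • v) j = c * ∑ j, v j := by
    simp [Pi.smul_apply, smul_eq_mul, Finset.mul_sum]
  by_cases hv : v ∈ Sc n 1
  · have h1 : c • v ∈ Sc n c := by
      refine ⟨fun j => mul_nonneg hc.le (hv.1 j), ?_⟩
      rw [hsum]
      calc c * ∑ j, v j ≤ c * 1 := mul_le_mul_of_nonneg_left hv.2 hc.le
        _ = c := mul_one c
    rw [Set.indicator_of_mem h1, Set.indicator_of_mem hv]
    unfold Fc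
    have e1 : ∀ j : Fin n, (((c • v) j : ℝ) : ℂ) ^ (γ j.castSucc - 1) =
        (c:ℂ) ^ (γ j.castSucc - 1) * ((v j : ℝ) : ℂ) ^ (γ j.castSucc - 1) := by
      intro j
      have : ((c • v) j : ℝ) = c * v j := rfl
      rw [this, Complex.ofReal_mul, mul_cpow_ofReal_nonneg hc.le (hv.1 j)]
    have e2 : ((c - ∑ j, (c • v) j : ℝ) : ℂ) ^ (γ (Fin.last n) - 1) =
        (c:ℂ) ^ (γ (Fin.last n) - 1) * ((1 - ∑ j, v j : ℝ) : ℂ) ^ (γ (Fin.last n) - 1) := by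
      rw [hsum]
      have : c - c * ∑ j, v j = c * (1 - ∑ j, v j) := by ring
      rw [this, Complex.ofReal_mul, mul_cpow_ofReal_nonneg hc.le (by linarith [hv.2])]
    simp only [e1, e2, Finset.prod_mul_distrib]
    rw [cpow_finset_sum hc0]
    have expeq : (∑ j : Fin n, (γ j.castSucc - 1)) + (γ (Fin.last n) - 1) =
        (∑ j, γ j) - (n+1 : ℕ) := by
      rw [Finset.sum_sub_distrib]
      rw [Fin.sum_univ_castSucc (f := γ)]
      simp
      ring
    rw [← expeq, Complex.cpow_add _ _ hc0]
    ring
  · have h1 : c • v ∉ Sc n c := by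
      intro h
      refine hv ⟨fun j => ?_, ?_⟩
      · have := h.1 j
        have : 0 ≤ c * v j := this
        exact nonneg_of_mul_nonneg_right this hc
      · have := h.2
        rw [hsum] at this
        nlinarith
    rw [Set.indicator_of_notMem h1, Set.indicator_of_notMem hv, mul_zero]


private lemma scaled (n : ℕ) (γ : Fin (n+1) → ℂ) {c : ℝ} (hc : 0 < c)
    (hIH : IntegrableOn (Fc n γ 1) (Sc n 1) volume) :
    IntegrableOn (Fc n γ c) (Sc n c) volume ∧
    (∫ t, (Sc n c).indicator (Fc n γ c) t) =
      (c:ℂ) ^ ((∑ j, γ j) - 1) * ∫ t, (Sc n 1).indicator (Fc n γ 1) t ∧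
    (∫ t, ‖(Sc n c).indicator (Fc n γ c) t‖) =
      c ^ ((∑ j, γ j).re - 1) * ∫ t, ‖(Sc n 1).indicator (Fc n γ 1) t‖ := by
  have hc0 : (c:ℂ) ≠ 0 := Complex.ofReal_ne_zero.2 hc.ne'
  have hcomp : (fun v => (Sc n c).indicator (Fc n γ c) (c • v)) =
      fun v => (c:ℂ) ^ ((∑ j, γ j) - (n+1 : ℕ)) * (Sc n 1).indicator (Fc n γ 1) v :=
    funext (smul_eq n γ hc)
  have hind1 : Integrable ((Sc n 1).indicator (Fc n γ 1)) volume :=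
    (integrable_indicator_iff (measSc n 1)).2 hIH
  have hintc : Integrable ((Sc n c).indicator (Fc n γ c)) volume := by
    refine (integrable_comp_smul_iff volume _ hc.ne').1 ?_
    rw [hcomp]
    exact hind1.const_mul _
  have hfr : Module.finrank ℝ (Fin n → ℝ) = n := Module.finrank_fin_fun ℝ
  have hcn : (c:ℝ)^n ≠ 0 := pow_ne_zero _ hc.ne'
  have key : (((c ^ n : ℝ)) : ℂ) * ((c:ℂ) ^ ((∑ j, γ j) - (n+1 : ℕ))) =
      (c:ℂ) ^ ((∑ j, γ j) - 1) := by
    push_cast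
    rw [← Complex.cpow_natCast, ← Complex.cpow_add _ _ hc0]
    congr 1
    ring
  refine ⟨(integrable_indicator_iff (measSc n c)).1 hintc, ?_, ?_⟩
  · have h2 := Measure.integral_comp_smul_of_nonneg (volume : Measure (Fin n → ℝ))
      ((Sc n c).indicator (Fc n γ c)) c (hR := hc.le)
    rw [hcomp] at h2
    rw [integral_const_mul, hfr] at h2
    have h4 : (∫ t, (Sc n c).indicator (Fc n γ c) t) =
        (c^n : ℝ) • ((c:ℂ) ^ ((∑ j, γ j) - (n+1 : ℕ)) * ∫ t, (Sc n 1).indicator (Fc n γ 1) t) := by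
      rw [h2, smul_smul, mul_inv_cancel₀ hcn, one_smul]
    rw [h4, Complex.real_smul, ← mul_assoc, key]
  · have hcompn : (fun v => ‖(Sc n c).indicator (Fc n γ c) (c • v)‖) =
        fun v => ‖(c:ℂ) ^ ((∑ j, γ j) - (n+1 : ℕ))‖ *
          ‖(Sc n 1).indicator (Fc n γ 1) v‖ := by
      funext v
      rw [smul_eq n γ hc v, norm_mul]
    have h5 := Measure.integral_comp_smul_of_nonneg (volume : Measure (Fin n → ℝ))
      (fun t => ‖(Sc n c).indicator (Fc n γ c) t‖) c (hR := hc.le)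
    rw [show (fun v => (fun t => ‖(Sc n c).indicator (Fc n γ c) t‖) (c • v)) =
        (fun v => ‖(Sc n c).indicator (Fc n γ c) (c • v)‖) from rfl, hcompn,
      integral_const_mul, hfr] at h5
    beta_reduce at h5
    have h4 : (∫ t, ‖(Sc n c).indicator (Fc n γ c) t‖) =
        (c^n : ℝ) • (‖(c:ℂ) ^ ((∑ j, γ j) - (n+1 : ℕ))‖ *
          ∫ t, ‖(Sc n 1).indicator (Fc n γ 1) t‖) := by
      rw [h5, smul_smul, mul_inv_cancel₀ hcn, one_smul]
    rw [h4, Complex.norm_cpow_eq_rpow_re_of_pos hc, smul_eq_mul, ← mul_assoc]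
    congr 1
    rw [← Real.rpow_natCast c n, ← Real.rpow_add hc]
    congr 1
    simp [Complex.sub_re]
    ring


private lemma succ_castSucc' {n : ℕ} (j : Fin n) :
    (j.castSucc).succ = (j.succ).castSucc := by
  ext; simp

private theorem mainDir (n : ℕ) : ∀ (γ : Fin (n+1) → ℂ), (∀ j, 0 < (γ j).re) →
    IntegrableOn (Fc n γ 1) (Sc n 1) volume ∧
    (∫ t, (Sc n 1).indicator (Fc n γ 1) t) =
      (∏ j, Complex.Gamma (γ j)) / Complex.Gamma (∑ j, γ j) := by
  induction n with
  | zero =>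
    intro γ hγ
    have huniv : (volume : Measure (Fin 0 → ℝ)) Set.univ = 1 := by
      simp [volume_pi, Measure.pi_univ]
    have hSuniv : Sc 0 1 = Set.univ := by
      ext t; simp [Sc]
    have hFone : Fc 0 γ 1 = fun _ => 1 := by
      funext t; simp [Fc]
    constructor
    · rw [hSuniv, hFone]
      exact integrableOn_const (by rw [huniv]; exact ENNReal.one_ne_top)
    · rw [hSuniv, hFone, Set.indicator_univ, integral_const, measureReal_def, huniv]
      simp only [ENNReal.toReal_one, one_smul]
      rw [Fin.prod_univ_one, Fin.sum_univ_one]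
      exact (div_self (Complex.Gamma_ne_zero_of_re_pos (hγ 0))).symm
  | succ n IH =>
    intro α hα
    set γ : Fin (n+1) → ℂ := fun j => α j.succ with hγdef
    have hγ : ∀ j, 0 < (γ j).re := fun j => hα _
    obtain ⟨hIH1, hIH2⟩ := IH γ hγ
    set σ := ∑ j, γ j with hσdef
    have hσ : 0 < σ.re := by
      rw [hσdef, Complex.re_sum]
      exact Finset.sum_pos (fun j _ => hγ j) Finset.univ_nonempty
    set D := (∏ j, Complex.Gamma (γ j)) / Complex.Gamma σ with hDdef
    set C₁ := ∫ v, ‖(Sc n 1).indicator (Fc n γ 1) v‖ with hC1def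
    set g : ℝ × (Fin n → ℝ) → ℂ :=
      fun p => ((p.1:ℂ) ^ (α 0 - 1)) * Fc n γ (1 - p.1) p.2 with hgdef
    set T : Set (ℝ × (Fin n → ℝ)) :=
      {p | 0 ≤ p.1 ∧ ((∀ j, 0 ≤ p.2 j) ∧ p.1 + ∑ j, p.2 j ≤ 1)} with hTdef
    have hT : MeasurableSet T := by
      have : T = {p : ℝ × (Fin n → ℝ) | 0 ≤ p.1} ∩
          ((⋂ j, {p : ℝ × (Fin n → ℝ) | 0 ≤ p.2 j}) ∩
            {p : ℝ × (Fin n → ℝ) | p.1 + ∑ j, p.2 j ≤ 1}) := by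
        ext p; simp [hTdef, Set.mem_iInter]
      rw [this]
      exact (measurableSet_le measurable_const measurable_fst).inter
        ((MeasurableSet.iInter fun j => measurableSet_le measurable_const
            ((measurable_pi_apply j).comp measurable_snd)).inter
          (measurableSet_le (measurable_fst.add
            (Finset.measurable_sum _ fun j _ => (measurable_pi_apply j).comp measurable_snd))
            measurable_const))
    have hg : Measurable g := by
      rw [hgdef]
      unfold Fc
      refine Measurable.mul ?_ (Measurable.mul ?_ ?_)
      · exact (meas_cpow_const' _).comp (Complex.measurable_ofReal.comp measurable_fst)
      · exact Finset.measurable_prod _ fun j _ => (meas_cpow_const' _).comp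
          (Complex.measurable_ofReal.comp ((measurable_pi_apply j).comp measurable_snd))
      · exact (meas_cpow_const' _).comp (Complex.measurable_ofReal.comp
          ((measurable_const.sub measurable_fst).sub
            (Finset.measurable_sum _ fun j _ => (measurable_pi_apply j).comp measurable_snd)))
    set ψ := MeasurableEquiv.piFinSuccAbove (fun _ : Fin (n+1) => ℝ) 0 with hψdef
    have mp : MeasurePreserving ψ volume volume :=
      volume_preserving_piFinSuccAbove (fun _ : Fin (n+1) => ℝ) 0
    have hψapp : ∀ t : Fin (n+1) → ℝ, ψ t = (t 0, fun j => t j.succ) := by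
      intro t
      simp only [hψdef, MeasurableEquiv.piFinSuccAbove_apply, Fin.zero_succAbove]
      rfl
    have key1 : ∀ t : Fin (n+1) → ℝ, Fc (n+1) α 1 t = g (ψ t) := by
      intro t
      rw [hψapp t, hgdef]
      show Fc (n+1) α 1 t =
        ((t 0:ℂ) ^ (α 0 - 1)) * Fc n γ (1 - t 0) (fun j => t j.succ)
      unfold Fc
      have hs : (1 : ℝ) - ∑ j : Fin (n+1), t j = (1 - t 0) - ∑ j : Fin n, t j.succ := by
        rw [Fin.sum_univ_succ]; ring
      rw [hs, Fin.prod_univ_succ]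
      simp only [hγdef, Fin.castSucc_zero, succ_castSucc', Fin.succ_last]
      ring
    have key2 : Sc (n+1) 1 = ψ ⁻¹' T := by
      ext t
      rw [Set.mem_preimage, hψapp t]
      simp only [Sc, hTdef, Set.mem_setOf_eq]
      constructor
      · rintro ⟨h1, h2⟩
        exact ⟨h1 0, fun j => h1 j.succ, by rw [← Fin.sum_univ_succ (f := t)]; exact h2⟩
      · rintro ⟨h0, h1, h2⟩
        refine ⟨fun j => Fin.cases h0 h1 j, ?_⟩
        rw [Fin.sum_univ_succ]; exact h2
    have ind_eq : (Sc (n+1) 1).indicator (Fc (n+1) α 1) = fun t => T.indicator g (ψ t) := by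
      funext t
      rw [key2]
      by_cases h : ψ t ∈ T
      · rw [Set.indicator_of_mem h, Set.indicator_of_mem (Set.mem_preimage.2 h), key1]
      · rw [Set.indicator_of_notMem h,
          Set.indicator_of_notMem (fun hh => h (Set.mem_preimage.1 hh))]
    have sec_eq : ∀ x : ℝ, x ∈ Set.Ioo (0:ℝ) 1 →
        (fun u => T.indicator g (x, u)) =
          fun u => ((x:ℂ) ^ (α 0 - 1)) * (Sc n (1-x)).indicator (Fc n γ (1-x)) u := by
      intro x hx; funext u
      by_cases h : u ∈ Sc n (1-x)
      · have h1 : (x,u) ∈ T := ⟨hx.1.le, h.1, by have := h.2; simp only [Sc] at this ⊢; linarith⟩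
        rw [Set.indicator_of_mem h1, Set.indicator_of_mem h]
      · have h1 : (x,u) ∉ T := by
          rintro ⟨-, h3, h4⟩
          exact h ⟨h3, by linarith⟩
        rw [Set.indicator_of_notMem h1, Set.indicator_of_notMem h, mul_zero]
    have sec_zero : ∀ x : ℝ, x ∉ Set.Icc (0:ℝ) 1 →
        (fun u => T.indicator g (x, u)) = fun _ => (0:ℂ) := by
      intro x hx; funext u
      rw [Set.indicator_of_notMem]
      rintro ⟨h0, h1, h2⟩
      refine hx ⟨h0, ?_⟩
      have : 0 ≤ ∑ j, u j := Finset.sum_nonneg fun j _ => h1 j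
      linarith
    have h01 : ∀ᵐ x : ℝ, x ∉ ({0,1} : Set ℝ) :=
      measure_eq_zero_iff_ae_notMem.1 (((Set.countable_singleton (1:ℝ)).insert 0).measure_zero _)
    have notIcc : ∀ x : ℝ, x ∉ ({0,1} : Set ℝ) → x ∉ Set.Ioo (0:ℝ) 1 →
        x ∉ Set.Icc (0:ℝ) 1 := by
      intro x hx hx1 hIcc
      have hx0 : x ≠ 0 := fun h => hx (by simp [h])
      have hx1' : x ≠ 1 := fun h => hx (by simp [h])
      exact hx1 ⟨hIcc.1.lt_of_ne' hx0, hIcc.2.lt_of_ne hx1'⟩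
    have hsm : AEStronglyMeasurable (T.indicator g) ((volume : Measure ℝ).prod volume) :=
      (hg.indicator hT).aestronglyMeasurable
    have hsec_int : ∀ᵐ x : ℝ, Integrable (fun u => T.indicator g (x, u)) volume := by
      filter_upwards [h01] with x hx
      by_cases hx1 : x ∈ Set.Ioo (0:ℝ) 1
      · rw [sec_eq x hx1]
        have hpos : (0:ℝ) < 1 - x := by linarith [hx1.2]
        exact ((integrable_indicator_iff (measSc n (1-x))).2
          (scaled n γ hpos hIH1).1).const_mul _
      · rw [sec_zero x (notIcc x hx hx1)]
        exact integrable_zero _ _ _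
    have norm_scaled : ∀ x ∈ Set.Ioo (0:ℝ) 1,
        (∫ u, ‖T.indicator g (x, u)‖) =
          ‖(x:ℂ) ^ (α 0 - 1) * ((1-x:ℝ):ℂ) ^ (σ - 1)‖ * C₁ := by
      intro x hx
      have hpos : (0:ℝ) < 1 - x := by linarith [hx.2]
      simp only [fun u => congrFun (sec_eq x hx) u]
      simp only [norm_mul]
      rw [integral_const_mul, (scaled n γ hpos hIH1).2.2, ← hC1def]
      rw [Complex.norm_cpow_eq_rpow_re_of_pos hpos]
      have : (σ - 1).re = σ.re - 1 := by simp [Complex.sub_re]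
      rw [this]; ring
    have castid : (fun x : ℝ => (x:ℂ) ^ (α 0 - 1) * ((1-x:ℝ):ℂ) ^ (σ - 1)) =
        fun x : ℝ => (x:ℂ) ^ (α 0 - 1) * (1 - (x:ℂ)) ^ (σ - 1) := by
      funext x; push_cast; ring
    have hBint : Integrable ((Set.Ioo (0:ℝ) 1).indicator
        (fun x => ‖(x:ℂ) ^ (α 0 - 1) * ((1-x:ℝ):ℂ) ^ (σ - 1)‖ * C₁)) := by
      have hbeta := Complex.betaIntegral_convergent (hα 0) hσ
      rw [intervalIntegrable_iff, Set.uIoc_of_le zero_le_one] at hbeta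
      have hbeta2 : IntegrableOn
          (fun x : ℝ => (x:ℂ) ^ (α 0 - 1) * ((1-x:ℝ):ℂ) ^ (σ - 1)) (Set.Ioc 0 1) := by
        rw [castid]; exact hbeta
      have h3 : IntegrableOn (fun x : ℝ => ‖(x:ℂ) ^ (α 0 - 1) * ((1-x:ℝ):ℂ) ^ (σ - 1)‖ * C₁)
          (Set.Ioc 0 1) := (hbeta2.norm).mul_const C₁
      exact (integrable_indicator_iff measurableSet_Ioo).2
        (h3.mono_set Set.Ioo_subset_Ioc_self)
    have ae_norm : (fun x => ∫ u, ‖T.indicator g (x, u)‖) =ᵐ[volume]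
        (Set.Ioo (0:ℝ) 1).indicator
          (fun x => ‖(x:ℂ) ^ (α 0 - 1) * ((1-x:ℝ):ℂ) ^ (σ - 1)‖ * C₁) := by
      filter_upwards [h01] with x hx
      by_cases hx1 : x ∈ Set.Ioo (0:ℝ) 1
      · rw [norm_scaled x hx1, Set.indicator_of_mem hx1]
      · simp only [fun u => congrFun (sec_zero x (notIcc x hx hx1)) u,
          Set.indicator_of_notMem hx1]
        simp
    have hInt : Integrable (T.indicator g) ((volume : Measure ℝ).prod volume) :=
      (integrable_prod_iff hsm).2 ⟨hsec_int, hBint.congr ae_norm.symm⟩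
    have hIntv : Integrable (T.indicator g) (volume : Measure (ℝ × (Fin n → ℝ))) := by
      rw [Measure.volume_eq_prod]; exact hInt
    have hIndInt : Integrable ((Sc (n+1) 1).indicator (Fc (n+1) α 1)) volume := by
      rw [ind_eq]
      exact (mp.integrable_comp_emb ψ.measurableEmbedding).2 hIntv
    refine ⟨(integrable_indicator_iff (measSc (n+1) 1)).1 hIndInt, ?_⟩
    have step1 : (∫ t, (Sc (n+1) 1).indicator (Fc (n+1) α 1) t) =
        ∫ p, T.indicator g p ∂((volume : Measure ℝ).prod volume) := by
      rw [ind_eq, mp.integral_comp ψ.measurableEmbedding, Measure.volume_eq_prod]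
    rw [step1, integral_prod _ hInt]
    have ae_int : (fun x => ∫ u, T.indicator g (x, u)) =ᵐ[volume]
        (Set.Ioo (0:ℝ) 1).indicator
          (fun x => (x:ℂ) ^ (α 0 - 1) * ((1-x:ℝ):ℂ) ^ (σ - 1) * D) := by
      filter_upwards [h01] with x hx
      by_cases hx1 : x ∈ Set.Ioo (0:ℝ) 1
      · simp only [fun u => congrFun (sec_eq x hx1) u, Set.indicator_of_mem hx1]
        have hpos : (0:ℝ) < 1 - x := by linarith [hx1.2]
        rw [integral_const_mul, (scaled n γ hpos hIH1).2.1, hIH2]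
        ring
      · simp only [fun u => congrFun (sec_zero x (notIcc x hx hx1)) u,
          Set.indicator_of_notMem hx1]
        simp
    rw [integral_congr_ae ae_int, integral_indicator measurableSet_Ioo]
    have hbetaval : (∫ x in Set.Ioo (0:ℝ) 1, (x:ℂ) ^ (α 0 - 1) * ((1-x:ℝ):ℂ) ^ (σ - 1)) =
        Complex.betaIntegral (α 0) σ := by
      rw [← integral_Ioc_eq_integral_Ioo, Complex.betaIntegral,
        intervalIntegral.integral_of_le zero_le_one, castid]
    have step2 : (∫ x in Set.Ioo (0:ℝ) 1,
        (x:ℂ) ^ (α 0 - 1) * ((1-x:ℝ):ℂ) ^ (σ - 1) * D) =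
        Complex.betaIntegral (α 0) σ * D := by
      rw [integral_mul_const, hbetaval]
    rw [step2]
    have hb := Complex.Gamma_mul_Gamma_eq_betaIntegral (hα 0) hσ
    have hΓσ : Complex.Gamma σ ≠ 0 := Complex.Gamma_ne_zero_of_re_pos hσ
    have hΓs : Complex.Gamma (α 0 + σ) ≠ 0 :=
      Complex.Gamma_ne_zero_of_re_pos (by rw [Complex.add_re]; exact add_pos (hα 0) hσ)
    have hbeta' : Complex.betaIntegral (α 0) σ =
        Complex.Gamma (α 0) * Complex.Gamma σ / Complex.Gamma (α 0 + σ) := by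
      rw [eq_div_iff hΓs, mul_comm, ← hb]
    rw [hbeta', hDdef]
    rw [Fin.prod_univ_succ (f := fun j => Complex.Gamma (α j)), Fin.sum_univ_succ (f := α)]
    have hss : (∑ j : Fin (n+1), α j.succ) = σ := rfl
    have hps : (∏ j : Fin (n+1), Complex.Gamma (α j.succ)) =
        ∏ j, Complex.Gamma (γ j) := rfl
    rw [hss, hps]
    field_simp

end DirichletAux


/-- Dirichlet's integral over the standard simplex:
`∫_{Δᵏ} t₁^{α₁-1} ⋯ t_k^{α_k-1} (1-t₁-⋯-t_k)^{α_{k+1}-1} dt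
  = Γ(α₁)⋯Γ(α_{k+1}) / Γ(α₁+⋯+α_{k+1})`, including integrability. -/
theorem stmt6 (k : ℕ) (α : Fin (k + 1) → ℂ) (hα : ∀ j, 0 < (α j).re) :
    IntegrableOn
      (fun t : Fin k → ℝ =>
        (∏ j : Fin k, ((t j : ℂ) ^ (α j.castSucc - 1))) *
          (((1 - ∑ j, t j : ℝ) : ℂ) ^ (α (Fin.last k) - 1)))
      {t : Fin k → ℝ | (∀ j, 0 ≤ t j) ∧ ∑ j, t j ≤ 1} volume ∧
    (∫ t : Fin k → ℝ in {t : Fin k → ℝ | (∀ j, 0 ≤ t j) ∧ ∑ j, t j ≤ 1},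
        (∏ j : Fin k, ((t j : ℂ) ^ (α j.castSucc - 1))) *
          (((1 - ∑ j, t j : ℝ) : ℂ) ^ (α (Fin.last k) - 1)))
      = (∏ j, Complex.Gamma (α j)) / Complex.Gamma (∑ j, α j) := by
  obtain ⟨h1, h2⟩ := mainDir k α hα
  rw [integral_indicator (measSc k 1)] at h2
  exact ⟨h1, h2⟩
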